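/- Let g ∈ R[x_j^{(k)}] and δ the shift derivation. For s ≥ 1, δ^s(g) is linear in its highest-order variables: for each j with ord_{x_j}(g) = a_j ≥ 0, one has δ^s(g) = ∑_j (∂g/∂x_j^{(a_j)}) · x_j^{(a_j+s)} + (terms involving only variables x_j^{(k)} with k < a_j + s), where the coefficients ∂g/∂x_j^{(a_j)} involve only variables of order ≤ a_j. -/

import Mathlib

open MvPolynomial

section Aux

variable {R : Type*} [CommRing R] {m : ℕ}

/-- Partial derivatives commute. -/
lemma pderiv_comm_aux (i i' : Fin m × ℕ) (p : MvPolynomial (Fin m × ℕ) R) :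
    pderiv i (pderiv i' p) = pderiv i' (pderiv i p) := by
  classical
  have h : ⁅(pderiv i : Derivation R (MvPolynomial (Fin m × ℕ) R) _), pderiv i'⁆
      = (0 : Derivation R (MvPolynomial (Fin m × ℕ) R) _) := by
    apply derivation_ext
    intro n
    rw [Derivation.commutator_apply]
    rcases eq_or_ne i' n with h1 | h1 <;> rcases eq_or_ne i n with h2 | h2 <;>
      simp [h1, h2, pderiv_X, Pi.single_apply]
  have := DFunLike.congr_fun h p
  rw [Derivation.commutator_apply] at this
  simpa [sub_eq_zero] using this

/-- The commutation relation between `pderiv (j, k+1)` and the shift derivation. -/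
lemma comm_delta (δ : Derivation R (MvPolynomial (Fin m × ℕ) R) (MvPolynomial (Fin m × ℕ) R))
    (hδ : ∀ (j : Fin m) (k : ℕ), δ (X (j, k)) = X (j, k + 1))
    (j : Fin m) (k : ℕ) (p : MvPolynomial (Fin m × ℕ) R) :
    pderiv (j, k + 1) (δ p) = δ (pderiv (j, k + 1) p) + pderiv (j, k) p := by
  classical
  have h : ⁅(pderiv (j, k + 1) : Derivation R (MvPolynomial (Fin m × ℕ) R) _), δ⁆
      = (pderiv (j, k) : Derivation R (MvPolynomial (Fin m × ℕ) R) _) := by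
    apply derivation_ext
    rintro ⟨j', k'⟩
    rw [Derivation.commutator_apply, hδ]
    rcases eq_or_ne ((j : Fin m), k) ((j' : Fin m), k') with h1 | h1
    · obtain ⟨rfl, rfl⟩ := Prod.mk.injEq .. ▸ h1
      have : ((j, k) : Fin m × ℕ) ≠ (j, k + 1) := by simp
      simp [pderiv_X, Pi.single_apply, this.symm]
    · have h2 : ((j' : Fin m), k' + 1) ≠ (j, k + 1) := by
        simp only [Prod.mk.injEq, not_and, ne_eq]
        intro hj hk
        exact h1 (by simp [hj, Nat.add_right_cancel hk])
      have h3 : ((j' : Fin m), k') ≠ (j, k + 1) ∨ True := Or.inr trivial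
      rcases eq_or_ne ((j' : Fin m), k') ((j : Fin m), k + 1) with h4 | h4 <;>
        simp [pderiv_X, Pi.single_apply, h2, h4, (by simpa [eq_comm, Prod.ext_iff] using h1 :
          ¬(((j' : Fin m) = j) ∧ k' = k))]
  have := DFunLike.congr_fun h p
  rw [Derivation.commutator_apply] at this
  have := sub_eq_iff_eq_add.mp this
  rw [this]; ring

/-- δ raises the order bound by exactly one. -/
lemma order_step (δ : Derivation R (MvPolynomial (Fin m × ℕ) R) (MvPolynomial (Fin m × ℕ) R))
    (hδ : ∀ (j : Fin m) (k : ℕ), δ (X (j, k)) = X (j, k + 1))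
    (p : MvPolynomial (Fin m × ℕ) R) (c : Fin m → ℕ)
    (hp : ∀ (j : Fin m) (k : ℕ), c j ≤ k → pderiv (j, k) p = 0) :
    ∀ (j : Fin m) (k : ℕ), c j + 1 ≤ k → pderiv (j, k) (δ p) = 0 := by
  intro j k hk
  obtain ⟨k', rfl⟩ : ∃ k', k = k' + 1 := ⟨k - 1, by omega⟩
  rw [comm_delta δ hδ, hp j (k' + 1) (by omega), hp j k' (by omega), map_zero, add_zero]

end Aux

/-- `δ^s g` is linear in its highest-order variables: if `ord_{x_j}(g) = a j` for each
`j`, then for `s ≥ 1`,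
`δ^s g = ∑ j, (∂g/∂x_j^{(a j)}) * x_j^{(a j + s)} + h`, where `h` involves only variables
`x_j^{(k)}` with `k < a j + s`, and the coefficients `∂g/∂x_j^{(a j)}` involve only
variables of order at most `a j`. -/
theorem iterated_derivative_linear_in_top {R : Type*} [CommRing R] {m : ℕ}
    (δ : Derivation R (MvPolynomial (Fin m × ℕ) R) (MvPolynomial (Fin m × ℕ) R))
    (hδ : ∀ (j : Fin m) (k : ℕ), δ (X (j, k)) = X (j, k + 1))
    (g : MvPolynomial (Fin m × ℕ) R) (a : Fin m → ℕ)
    (horder : ∀ (j : Fin m) (k : ℕ), a j < k → pderiv (j, k) g = 0) :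
    ∀ s : ℕ, 1 ≤ s →
      ∃ h : MvPolynomial (Fin m × ℕ) R,
        (⇑δ)^[s] g = (∑ j, pderiv (j, a j) g * X (j, a j + s)) + h ∧
        (∀ (j : Fin m) (k : ℕ), a j + s ≤ k → pderiv (j, k) h = 0) ∧
        (∀ (j j' : Fin m) (k : ℕ), a j' < k →
          pderiv (j', k) (pderiv (j, a j) g) = 0) := by
  classical
  -- coefficients only involve variables of order ≤ a j
  have hcoef : ∀ (j j' : Fin m) (k : ℕ), a j' < k →
      pderiv (j', k) (pderiv (j, a j) g) = 0 := by
    intro j j' k hk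
    rw [pderiv_comm_aux, horder j' k hk, map_zero]
  intro s hs
  induction s, hs using Nat.le_induction with
  | base =>
    refine ⟨δ g - ∑ j, pderiv (j, a j) g * X (j, a j + 1), by
      rw [Function.iterate_one]; ring, ?_, hcoef⟩
    intro j' k hk
    obtain ⟨k', rfl⟩ : ∃ k', k = k' + 1 := ⟨k - 1, by omega⟩
    have hk' : a j' ≤ k' := by omega
    rw [map_sub, comm_delta δ hδ, horder j' (k' + 1) (by omega), map_zero, zero_add,
      map_sum]
    have hsum : ∀ j ∈ Finset.univ, pderiv ((j' : Fin m), k' + 1)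
        (pderiv (j, a j) g * X (j, a j + 1)) =
        if ((j : Fin m), a j + 1) = ((j' : Fin m), k' + 1) then pderiv (j, a j) g else 0 := by
      intro j _
      rw [pderiv_mul, hcoef j j' (k' + 1) (by omega), zero_mul, zero_add]
      rcases eq_or_ne ((j : Fin m), a j + 1) ((j' : Fin m), k' + 1) with h1 | h1
      · simp [h1]
      · simp [h1, pderiv_X, Pi.single_apply, (by simpa [eq_comm] using h1 :
          ((j' : Fin m), k' + 1) ≠ ((j : Fin m), a j + 1))]
    rw [Finset.sum_congr rfl hsum]
    have hsum2 : ∀ x : Fin m,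
        (if ((x : Fin m), a x + 1) = ((j' : Fin m), k' + 1) then pderiv (x, a x) g else 0)
          = if x = j' then (if a j' = k' then pderiv ((j' : Fin m), k') g else 0) else 0 := by
      intro x
      rcases eq_or_ne x j' with rfl | hx
      · rcases eq_or_ne (a x) k' with he | he
        · simp [he]
        · simp [he, fun hc => he (Nat.add_right_cancel hc)]
      · simp [hx, fun hc => hx hc]
    rw [Finset.sum_congr rfl (fun x _ => hsum2 x), Finset.sum_ite_eq' Finset.univ j']
    rcases eq_or_ne (a j') k' with he | he
    · simp [he]
    · rw [horder j' k' (by omega)]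
      simp [he]
  | succ s hs ih =>
    obtain ⟨h, hrep, hord, -⟩ := ih
    refine ⟨(∑ j, δ (pderiv (j, a j) g) * X (j, a j + s)) + δ h, ?_, ?_, hcoef⟩
    · rw [Function.iterate_succ_apply', hrep, map_add, map_sum]
      have : ∀ j ∈ Finset.univ, δ (pderiv (j, a j) g * X (j, a j + s)) =
          δ (pderiv (j, a j) g) * X (j, a j + s) +
            pderiv (j, a j) g * X (j, a j + 1 + s) := by
        intro j _
        rw [Derivation.leibniz, hδ, smul_eq_mul, smul_eq_mul, Nat.add_right_comm (a j) s 1]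
        ring
      rw [Finset.sum_congr rfl this, Finset.sum_add_distrib]
      simp only [add_assoc, Nat.add_comm 1 s]
      ring
    · intro j' k hk
      rw [map_add, map_sum]
      have h1 : pderiv ((j' : Fin m), k) (δ h) = 0 :=
        order_step δ hδ h (fun j => a j + s) (fun j k hk => hord j k hk) j' k (show a j' + s + 1 ≤ k by omega)
      have h2 : ∀ j ∈ Finset.univ, pderiv ((j' : Fin m), k)
          (δ (pderiv (j, a j) g) * X (j, a j + s)) = 0 := by
        intro j _
        rw [pderiv_mul]
        have hc : pderiv ((j' : Fin m), k) (δ (pderiv (j, a j) g)) = 0 :=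
          order_step δ hδ _ (fun j' => a j' + 1)
            (fun j'' k'' hk'' => hcoef j j'' k'' (Nat.lt_of_lt_of_le (Nat.lt_succ_self _) hk'')) j' k
            (show a j' + 1 + 1 ≤ k by omega)
        have hx : pderiv ((j' : Fin m), k) (X ((j : Fin m), a j + s)
            : MvPolynomial (Fin m × ℕ) R) = 0 := by
          apply pderiv_X_of_ne
          simp only [ne_eq, Prod.mk.injEq, not_and]
          intro hj; subst hj; omega
        rw [hc, hx, zero_mul, mul_zero, add_zero]
      rw [Finset.sum_eq_zero h2, h1, add_zero]
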